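/- Let n ≥ 1 be an integer, let a_1,…,a_n be positive reals and b_1,…,b_n be nonnegative reals with b_1/a_1 ≥ b_2/a_2 ≥ ⋯ ≥ b_n/a_n. Then for every permutation σ of {1,…,n}: Σ_{i=1}^{n} a_i·(Σ_{ℓ=i}^{n} b_ℓ) ≤ Σ_{i=1}^{n} a_{σ(i)}·(Σ_{ℓ=i}^{n} b_{σ(ℓ)}). -/

import Mathlib

/-- k²Q framework, worst-case ordering lemma (mathematical core of Lemma 6/11). -/
theorem k2q_worst_case_ordering (n : ℕ) (hn : 1 ≤ n)
    (a b : Fin n → ℝ)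
    (ha : ∀ i, 0 < a i) (hb : ∀ i, 0 ≤ b i)
    (hmono : ∀ i j : Fin n, i ≤ j → b j / a j ≤ b i / a i)
    (σ : Equiv.Perm (Fin n)) :
    ∑ i : Fin n, a i * (∑ ℓ ∈ Finset.Ici i, b ℓ) ≤
      ∑ i : Fin n, a (σ i) * (∑ ℓ ∈ Finset.Ici i, b (σ ℓ)) := by
  -- cross-multiplication consequence of hmono
  have cross : ∀ i j : Fin n, i ≤ j → a i * b j ≤ a j * b i := by
    intro i j hij
    have h := hmono i j hij
    have h2 := (div_le_div_iff₀ (ha j) (ha i)).mp h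
    nlinarith
  -- rewrite both sides as double sums with indicators
  have reorg : ∀ τ : Equiv.Perm (Fin n),
      ∑ i : Fin n, a (τ i) * (∑ ℓ ∈ Finset.Ici i, b (τ ℓ)) =
      ∑ j : Fin n, ∑ k : Fin n,
        if τ.symm j ≤ τ.symm k then a j * b k else 0 := by
    intro τ
    have step1 : ∀ i : Fin n,
        a (τ i) * (∑ ℓ ∈ Finset.Ici i, b (τ ℓ)) =
        ∑ ℓ : Fin n, if i ≤ ℓ then a (τ i) * b (τ ℓ) else 0 := by
      intro i
      rw [Finset.mul_sum]
      have hIci : Finset.Ici i = Finset.univ.filter (fun ℓ => i ≤ ℓ) := by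
        ext x; simp
      rw [hIci, Finset.sum_filter]
    have step2 :
        ∑ j : Fin n, ∑ k : Fin n, (if τ.symm j ≤ τ.symm k then a j * b k else 0) =
        ∑ i : Fin n, ∑ ℓ : Fin n, (if i ≤ ℓ then a (τ i) * b (τ ℓ) else 0) := by
      rw [← Equiv.sum_comp τ (fun j => ∑ k : Fin n,
        (if τ.symm j ≤ τ.symm k then a j * b k else 0))]
      refine Finset.sum_congr rfl fun i _ => ?_
      rw [← Equiv.sum_comp τ (fun k =>
        (if τ.symm (τ i) ≤ τ.symm k then a (τ i) * b k else 0))]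
      simp
    rw [step2]
    exact Finset.sum_congr rfl fun i _ => step1 i
  have lhs_eq := reorg 1
  simp only [Equiv.Perm.one_def, Equiv.refl_symm, Equiv.refl_apply] at lhs_eq
  rw [lhs_eq, reorg σ]
  set g : Fin n → Fin n → ℝ := fun j k => if j ≤ k then a j * b k else 0 with hg
  set h : Fin n → Fin n → ℝ := fun j k => if σ.symm j ≤ σ.symm k then a j * b k else 0 with hh
  -- pointwise symmetrized inequality
  have key : ∀ j k : Fin n, g j k + g k j ≤ h j k + h k j := by
    intro j k
    rcases lt_trichotomy j k with hjk | hjk | hjk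
    · have h1 : j ≤ k := le_of_lt hjk
      have h2 : ¬ k ≤ j := not_le_of_gt hjk
      have hle := cross j k h1
      by_cases hc : σ.symm j ≤ σ.symm k
      · simp only [hg, hh, if_pos h1, if_neg h2, if_pos hc]
        by_cases hc2 : σ.symm k ≤ σ.symm j
        · simp only [if_pos hc2]; nlinarith [ha k, hb j]
        · simp only [if_neg hc2]; linarith
      · have hc2 : σ.symm k ≤ σ.symm j := le_of_not_ge hc
        simp only [hg, hh, if_pos h1, if_neg h2, if_neg hc, if_pos hc2]
        linarith
    · subst hjk
      have h1 : j ≤ j := le_refl j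
      have hc : σ.symm j ≤ σ.symm j := le_refl _
      simp only [hg, hh, if_pos h1, if_pos hc]
      linarith
    · have h1 : k ≤ j := le_of_lt hjk
      have h2 : ¬ j ≤ k := not_le_of_gt hjk
      have hle := cross k j h1
      by_cases hc : σ.symm j ≤ σ.symm k
      · simp only [hg, hh, if_neg h2, if_pos h1, if_pos hc]
        by_cases hc2 : σ.symm k ≤ σ.symm j
        · simp only [if_pos hc2]; nlinarith [ha j, hb k]
        · simp only [if_neg hc2]; linarith
      · have hc2 : σ.symm k ≤ σ.symm j := le_of_not_ge hc
        simp only [hg, hh, if_neg h2, if_pos h1, if_neg hc, if_pos hc2]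
        linarith
    -- sum it up
  have sumg : ∑ j : Fin n, ∑ k : Fin n, g k j = ∑ j : Fin n, ∑ k : Fin n, g j k :=
    Finset.sum_comm
  have sumh : ∑ j : Fin n, ∑ k : Fin n, h k j = ∑ j : Fin n, ∑ k : Fin n, h j k :=
    Finset.sum_comm
  have main : ∑ j : Fin n, ∑ k : Fin n, (g j k + g k j) ≤
      ∑ j : Fin n, ∑ k : Fin n, (h j k + h k j) := by
    refine Finset.sum_le_sum fun j _ => Finset.sum_le_sum fun k _ => key j k
  simp only [Finset.sum_add_distrib] at main
  show ∑ j : Fin n, ∑ k : Fin n, g j k ≤ ∑ j : Fin n, ∑ k : Fin n, h j k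
  linarith
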